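/- Let d > 4 be a positive integer and let Z_d = {z ∈ ℂ : z^d = 1} be the set of d-th roots of unity in ℂ. If A and B are finite subsets of ℂ with A + B = Z_d, then A or B is a singleton (i.e., |A| = 1 or |B| = 1). -/

import Mathlib

open Pointwise

/-- A nonzero quadratic has at most two roots in any finset. -/
lemma quad_card_le_two (a b c : ℂ) (ha : a ≠ 0) (S : Finset ℂ)
    (hS : ∀ z ∈ S, a * z ^ 2 + b * z + c = 0) : S.card ≤ 2 := by
  by_contra hcard
  push_neg at hcard
  obtain ⟨z₁, z₂, z₃, h₁, h₂, h₃, h12, h13, h23⟩ := Finset.two_lt_card_iff.mp hcard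
  have e12 : a * (z₁ + z₂) + b = 0 := by
    have hfac : (z₁ - z₂) * (a * (z₁ + z₂) + b) = 0 := by
      linear_combination hS z₁ h₁ - hS z₂ h₂
    rcases mul_eq_zero.mp hfac with h | h
    · exact absurd (sub_eq_zero.mp h) h12
    · exact h
  have e13 : a * (z₁ + z₃) + b = 0 := by
    have hfac : (z₁ - z₃) * (a * (z₁ + z₃) + b) = 0 := by
      linear_combination hS z₁ h₁ - hS z₃ h₃
    rcases mul_eq_zero.mp hfac with h | h
    · exact absurd (sub_eq_zero.mp h) h13
    · exact h
  have : a * (z₂ - z₃) = 0 := by linear_combination e12 - e13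
  rcases mul_eq_zero.mp this with h | h
  · exact ha h
  · exact h23 (sub_eq_zero.mp h)

/-- Roots of unity have `z * conj z = 1`. -/
lemma conj_mul_of_pow_eq_one {d : ℕ} (hd : d ≠ 0) {z : ℂ} (hz : z ^ d = 1) :
    z * (starRingEnd ℂ) z = 1 := by
  have habs : ‖z‖ ^ d = 1 := by
    rw [← norm_pow, hz, norm_one]
  have h1 : ‖z‖ = 1 := by
    rcases (pow_eq_one_iff_cases.mp habs) with h | h | h
    · omega
    · exact h
    · nlinarith [norm_nonneg z, h.1]
  have := Complex.mul_conj z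
  rw [this, Complex.normSq_eq_norm_sq, h1]
  norm_num

/-- If two distinct elements of `A` exist and all sums are `d`-th roots of unity,
then `B` has at most two elements. -/
lemma card_le_two_of_two_mem {d : ℕ} (hd : d ≠ 0) (A B : Finset ℂ)
    (hAB : ∀ a ∈ A, ∀ b ∈ B, (a + b) ^ d = 1)
    {a₁ a₂ : ℂ} (ha₁ : a₁ ∈ A) (ha₂ : a₂ ∈ A) (hne : a₁ ≠ a₂) : B.card ≤ 2 := by
  set c : ℂ := a₂ - a₁ with hc
  have hc0 : c ≠ 0 := sub_ne_zero.mpr (Ne.symm hne)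
  have hc0' : (starRingEnd ℂ) c ≠ 0 := by
    simpa using hc0
  have hinj : (B.image (fun b => a₁ + b)).card = B.card :=
    Finset.card_image_of_injective _ (add_right_injective a₁)
  rw [← hinj]
  apply quad_card_le_two ((starRingEnd ℂ) c) (c * (starRingEnd ℂ) c) c hc0'
  intro z hzmem
  obtain ⟨b, hb, rfl⟩ := Finset.mem_image.mp hzmem
  set z := a₁ + b
  have hz : z * (starRingEnd ℂ) z = 1 :=
    conj_mul_of_pow_eq_one hd (hAB a₁ ha₁ b hb)
  have hw : (z + c) * ((starRingEnd ℂ) z + (starRingEnd ℂ) c) = 1 := by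
    have h2 : a₂ + b = z + c := by ring
    have := conj_mul_of_pow_eq_one hd (hAB a₂ ha₂ b hb)
    rw [h2, map_add] at this
    exact this
  linear_combination z * hw - (z + c) * hz

theorem sumset_decomposition_roots_of_unity_complex
    (d : ℕ) (hd : 4 < d) (A B : Finset ℂ)
    (h : ((↑A + ↑B : Set ℂ)) = {z : ℂ | z ^ d = 1}) :
    A.card = 1 ∨ B.card = 1 := by
  have hd0 : d ≠ 0 := by omega
  have hdpos : 0 < d := by omega
  have hAB : ∀ a ∈ A, ∀ b ∈ B, (a + b) ^ d = 1 := by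
    intro a ha b hb
    have : a + b ∈ (↑A + ↑B : Set ℂ) := Set.add_mem_add ha hb
    rw [h] at this
    exact this
  -- nonemptiness
  have h1 : (1 : ℂ) ∈ (↑A + ↑B : Set ℂ) := by
    rw [h]; simp
  obtain ⟨a0, ha0, b0, hb0, -⟩ := Set.mem_add.mp h1
  by_contra hcon
  push_neg at hcon
  obtain ⟨hA1, hB1⟩ := hcon
  have hA2 : 1 < A.card := by
    have : 0 < A.card := Finset.card_pos.mpr ⟨a0, ha0⟩
    omega
  have hB2 : 1 < B.card := by
    have : 0 < B.card := Finset.card_pos.mpr ⟨b0, hb0⟩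
    omega
  obtain ⟨a₁, ha₁, a₂, ha₂, hane⟩ := Finset.one_lt_card.mp hA2
  obtain ⟨b₁, hb₁, b₂, hb₂, hbne⟩ := Finset.one_lt_card.mp hB2
  have hBle : B.card ≤ 2 := card_le_two_of_two_mem hd0 A B hAB ha₁ ha₂ hane
  have hAle : A.card ≤ 2 := by
    refine card_le_two_of_two_mem hd0 B A ?_ hb₁ hb₂ hbne
    intro b hb a ha
    rw [add_comm]
    exact hAB a ha b hb
  -- A + B as a Finset equals the nthRootsFinset, which has d elements
  have hcoe : ((↑(A + B) : Set ℂ)) = {z : ℂ | z ^ d = 1} := by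
    rw [Finset.coe_add]; exact h
  have heq : A + B = Polynomial.nthRootsFinset d (1 : ℂ) := by
    apply Finset.coe_injective
    rw [hcoe]
    ext z
    simp [Polynomial.mem_nthRootsFinset hdpos (1 : ℂ)]
  have hcard : (A + B).card = d := by
    rw [heq]
    exact (Complex.isPrimitiveRoot_exp d hd0).card_nthRootsFinset
  have hle : (A + B).card ≤ A.card * B.card := Finset.card_add_le
  have h4 : A.card * B.card ≤ 4 := by
    calc A.card * B.card ≤ 2 * 2 := Nat.mul_le_mul hAle hBle
    _ = 4 := rfl
  omega
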